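/- Let r,s ≥ 1 and let T be a tree whose vertex set is partitioned into {u_1,…,u_r} and {v_1,…,v_s}, with every edge joining some u_j to some v_k, such that there do not exist edges u_j v_k and u_{j'} v_{k'} with j < j' and k > k'. Let a, b, c be integers and define a labeling f by f(u_j) = a + j − 1 for 1 ≤ j ≤ r, f(v_k) = b + k − 1 for 1 ≤ k ≤ s, and f(u_j v_k) = c + (r+s) − (j+k) for every edge u_j v_k of T. Then f(u) + f(v) + f(uv) = a + b + c + r + s − 2 for every edge uv of T; moreover the edge labels used are exactly the consecutive integers c, c+1, …, c+(r+s−2). -/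

import Mathlib

/-- Let `r, s ≥ 1` and let `T` be a tree on the vertex set
`{u_1,…,u_r} ⊔ {v_1,…,v_s}` (modeled as `Fin r ⊕ Fin s`, 0-based), with every edge joining
some `u_j` to some `v_k` and no edges `u_j v_k`, `u_{j'} v_{k'}` with `j < j'` and `k > k'`.
Let `a, b, c` be integers and define `f(u_j) = a + j − 1`, `f(v_k) = b + k − 1` and
`f(u_j v_k) = c + (r+s) − (j+k)` (1-based indices).  Then `f(u)+f(v)+f(uv) = a+b+c+r+s−2`
for every edge `uv` of `T`, and the edge labels used are exactly the consecutive integers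
`c, c+1, …, c+(r+s−2)`. -/
theorem well_behaved_labeling_of_caterpillar (r s : ℕ) (hr : 1 ≤ r) (hs : 1 ≤ s)
    (T : SimpleGraph (Fin r ⊕ Fin s)) (hT : T.IsTree)
    (hbipL : ∀ j j' : Fin r, ¬ T.Adj (Sum.inl j) (Sum.inl j'))
    (hbipR : ∀ k k' : Fin s, ¬ T.Adj (Sum.inr k) (Sum.inr k'))
    (hcross : ∀ (j j' : Fin r) (k k' : Fin s),
      T.Adj (Sum.inl j) (Sum.inr k) → T.Adj (Sum.inl j') (Sum.inr k') →
      j < j' → ¬ k' < k)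
    (a b c : ℤ) :
    (∀ (j : Fin r) (k : Fin s), T.Adj (Sum.inl j) (Sum.inr k) →
      (a + (j.val + 1) - 1) + (b + (k.val + 1) - 1) +
        (c + (r + s : ℕ) - ((j.val + 1) + (k.val + 1))) =
      a + b + c + r + s - 2) ∧
    {x : ℤ | ∃ (j : Fin r) (k : Fin s), T.Adj (Sum.inl j) (Sum.inr k) ∧
        x = c + (r + s : ℕ) - ((j.val + 1) + (k.val + 1))} =
      Set.Icc c (c + (r + s : ℕ) - 2) := by
  classical
  constructor
  · intro j k h
    push_cast
    ring
  · have key : ∀ t : ℕ, t < r + s - 1 →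
        ∃ (j : Fin r) (k : Fin s), T.Adj (Sum.inl j) (Sum.inr k) ∧ j.val + k.val = t := by
      intro t ht
      set P : Finset (Fin r × Fin s) :=
        Finset.univ.filter (fun p => T.Adj (Sum.inl p.1) (Sum.inr p.2)) with hP
      have hPcard : P.card = r + s - 1 := by
        have hedge : T.edgeFinset.card = r + s - 1 := by
          have h1 := hT.card_edgeFinset
          simp only [Fintype.card_sum, Fintype.card_fin] at h1
          omega
        rw [← hedge]
        apply Finset.card_bij (fun p _ => s(Sum.inl p.1, Sum.inr p.2))
        · intro p hp
          simp only [SimpleGraph.mem_edgeFinset, SimpleGraph.mem_edgeSet]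
          simp only [hP, Finset.mem_filter, Finset.mem_univ, true_and] at hp
          exact hp
        · intro p hp q hq hpq
          rw [Sym2.eq_iff] at hpq
          rcases hpq with ⟨h1, h2⟩ | ⟨h1, h2⟩
          · exact Prod.ext (Sum.inl_injective h1) (Sum.inr_injective h2)
          · exact absurd h1 (by simp)
        · intro e he
          induction e using Sym2.ind with
          | _ x y =>
            simp only [SimpleGraph.mem_edgeFinset, SimpleGraph.mem_edgeSet] at he
            match x, y with
            | Sum.inl j, Sum.inl j' => exact absurd he (hbipL j j')
            | Sum.inl j, Sum.inr k =>
              exact ⟨(j, k), by simp [hP, he], rfl⟩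
            | Sum.inr k, Sum.inl j =>
              exact ⟨(j, k), by simp [hP]; exact he.symm, Sym2.eq_swap⟩
            | Sum.inr k, Sum.inr k' => exact absurd he (hbipR k k')
      have himg : P.image (fun p : Fin r × Fin s => p.1.val + p.2.val)
          = Finset.range (r + s - 1) := by
        apply Finset.eq_of_subset_of_card_le
        · intro n hn
          simp only [Finset.mem_image] at hn
          obtain ⟨p, hp, rfl⟩ := hn
          have h1 := p.1.isLt
          have h2 := p.2.isLt
          simp only [Finset.mem_range]
          omega
        · rw [Finset.card_range, ← hPcard]
          apply Finset.card_le_card_of_injOn (fun p : Fin r × Fin s => p.1.val + p.2.val)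
          · intro p hp
            simp only [Finset.mem_coe, Finset.mem_image]
            exact ⟨p, hp, rfl⟩
          · intro p hp q hq hpq
            simp only [Finset.mem_coe, hP, Finset.mem_filter, Finset.mem_univ, true_and] at hp hq
            have hc1 := hcross p.1 q.1 p.2 q.2 hp hq
            have hc2 := hcross q.1 p.1 q.2 p.2 hq hp
            have h1 : p.1 = q.1 := by
              by_contra hne
              rcases lt_or_gt_of_ne hne with h | h
              · exact hc1 h (by
                  simp only [Fin.lt_def] at h ⊢
                  simp only at hpq
                  omega)
              · exact hc2 h (by
                  simp only [Fin.lt_def] at h ⊢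
                  simp only at hpq
                  omega)
            have h2 : p.2 = q.2 := by
              apply Fin.ext
              have := congrArg Fin.val h1
              simp only at hpq
              omega
            exact Prod.ext h1 h2
      have := himg ▸ (Finset.mem_range.mpr ht)
      simp only [Finset.mem_image] at this
      obtain ⟨p, hp, hsum⟩ := this
      simp only [hP, Finset.mem_filter, Finset.mem_univ, true_and] at hp
      exact ⟨p.1, p.2, hp, hsum⟩
    ext x
    simp only [Set.mem_setOf_eq, Set.mem_Icc]
    constructor
    · rintro ⟨j, k, hadj, rfl⟩
      have hj := j.isLt
      have hk := k.isLt
      push_cast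
      constructor <;> omega
    · rintro ⟨h1, h2⟩
      have h2' : x ≤ c + (r + s : ℤ) - 2 := by push_cast at h2 ⊢; omega
      obtain ⟨j, k, hadj, hsum⟩ := key (c + (r + s : ℤ) - 2 - x).toNat (by omega)
      refine ⟨j, k, hadj, ?_⟩
      push_cast
      omega
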